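/- For every step labelled transition system with divergence, every finite synchronization tree t over Stp, and every process p: t ≲ p if and only if t ⊑^fin_ω p (where t and p are compared in the disjoint union of the tree transition system and the given SLTS). -/

import Mathlib

/-- A labelled transition system with divergence over a type `Lab` of labels. -/
structure LTS (Lab : Type) where
  Proc : Type
  Trans : Proc → Lab → Proc → Prop
  Div : Proc → Prop

namespace LTS

variable {Lab : Type}

/-- The set of initial labels of a process. -/
def initials (L : LTS Lab) (p : L.Proc) : Set Lab :=
  {U | ∃ q, L.Trans p U q}

/-- The stratified relations `⊑^P_n` relative to a set `P` of labels. -/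
def strat (L : LTS Lab) (P : Set Lab) : ℕ → L.Proc → L.Proc → Prop
  | 0, _, _ => True
  | n + 1, p, q =>
      (∀ U ∈ P, ∀ p', L.Trans p U p' → ∃ q', L.Trans q U q' ∧ L.strat P n p' q') ∧
      (L.initials p ⊆ P → ¬ L.Div p →
        L.initials q ⊆ P ∧ ¬ L.Div q ∧
        ∀ U ∈ P, ∀ q', L.Trans q U q' → ∃ p', L.Trans p U p' ∧ L.strat P n p' q')

/-- `p ⊑^P_ω q` : `p ⊑^P_n q` for all `n`. -/
def stratOmega (L : LTS Lab) (P : Set Lab) (p q : L.Proc) : Prop :=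
  ∀ n, L.strat P n p q

/-- `p ⊑^fin_ω q` : `p ⊑^P_ω q` for every finite set of labels `P`. -/
def finOmega (L : LTS Lab) (p q : L.Proc) : Prop :=
  ∀ P : Set Lab, P.Finite → L.stratOmega P p q

/-- The functional `F` on binary relations over processes. -/
def F (L : LTS Lab) (R : L.Proc → L.Proc → Prop) (p q : L.Proc) : Prop :=
  ∀ U : Lab,
    (∀ p', L.Trans p U p' → ∃ q', L.Trans q U q' ∧ R p' q') ∧
    (¬ L.Div p → ¬ L.Div q ∧
      ∀ q', L.Trans q U q' → ∃ p', L.Trans p U p' ∧ R p' q')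

/-- A relation `R` is a prebisimulation iff `R ⊆ F(R)`. -/
def IsPrebisimulation (L : LTS Lab) (R : L.Proc → L.Proc → Prop) : Prop :=
  ∀ a b, R a b → L.F R a b

/-- `p ≲ q` : `p` and `q` are related by some prebisimulation. -/
def Pre (L : LTS Lab) (p q : L.Proc) : Prop :=
  ∃ R : L.Proc → L.Proc → Prop, L.IsPrebisimulation R ∧ R p q

/-- The iterates `⊑_n` of `F` applied to the total relation. -/
def iter (L : LTS Lab) : ℕ → L.Proc → L.Proc → Prop
  | 0, _, _ => True
  | n + 1, p, q => L.F (L.iter n) p q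

/-- `p ⊑_ω q` : `p ⊑_n q` for all `n`. -/
def preOmega (L : LTS Lab) (p q : L.Proc) : Prop :=
  ∀ n, L.iter n p q

end LTS

/-- Finite synchronization trees over a label type `Lab`: a finite list of summands
`U : t'` together with a flag recording whether `Ω` is a summand. -/
inductive STree (Lab : Type) : Type where
  | node : List (Lab × STree Lab) → Bool → STree Lab

namespace STree

variable {Lab : Type}

/-- The summands `U : t'` of a synchronization tree. -/
def children : STree Lab → List (Lab × STree Lab)
  | node l _ => l

/-- Whether `Ω` is a summand of the synchronization tree. -/
def omega : STree Lab → Bool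
  | node _ b => b

end STree

/-- The disjoint union of the transition system of finite synchronization trees
over `Lab` and a given LTS `L`. -/
def LTS.withTrees {Lab : Type} (L : LTS Lab) : LTS Lab where
  Proc := STree Lab ⊕ L.Proc
  Trans := fun x U y =>
    match x, y with
    | Sum.inl t, Sum.inl t' => (U, t') ∈ t.children
    | Sum.inr p, Sum.inr p' => L.Trans p U p'
    | _, _ => False
  Div := fun x =>
    match x with
    | Sum.inl t => t.omega = true
    | Sum.inr p => L.Div p


section Aux

namespace STree

variable {Lab : Type}

/-- All labels occurring anywhere in a synchronization tree. -/
def lbls : STree Lab → List Lab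
  | node l _ => l.attach.flatMap (fun x => x.1.1 :: lbls x.1.2)
decreasing_by
  have h1 := List.sizeOf_lt_of_mem x.2
  obtain ⟨⟨U, s⟩, hx⟩ := x
  simp at h1 ⊢
  omega

/-- The depth of a synchronization tree. -/
def dpt : STree Lab → ℕ
  | node l _ => (l.attach.map (fun x => dpt x.1.2)).foldr max 0 + 1
decreasing_by
  have h1 := List.sizeOf_lt_of_mem x.2
  obtain ⟨⟨U, s⟩, hx⟩ := x
  simp at h1 ⊢
  omega

theorem label_mem {t : STree Lab} {U : Lab} {t' : STree Lab}
    (h : (U, t') ∈ t.children) : U ∈ lbls t := by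
  cases t with
  | node l b =>
    simp only [children] at h
    rw [lbls]
    simp only [List.mem_flatMap, List.mem_attach]
    exact ⟨⟨(U, t'), h⟩, trivial, List.mem_cons_self⟩

theorem lbls_sub {t : STree Lab} {U : Lab} {t' : STree Lab}
    (h : (U, t') ∈ t.children) {a : Lab} (ha : a ∈ lbls t') : a ∈ lbls t := by
  cases t with
  | node l b =>
    simp only [children] at h
    rw [lbls]
    simp only [List.mem_flatMap, List.mem_attach]
    exact ⟨⟨(U, t'), h⟩, trivial, List.mem_cons_of_mem _ ha⟩

theorem le_foldr_max {a : ℕ} : ∀ {L : List ℕ}, a ∈ L → a ≤ L.foldr max 0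
  | c :: L, h => by
    rcases List.mem_cons.1 h with rfl | h
    · exact le_max_left _ _
    · exact le_trans (le_foldr_max h) (le_max_right _ _)

theorem dpt_lt {t : STree Lab} {U : Lab} {t' : STree Lab}
    (h : (U, t') ∈ t.children) : dpt t' < dpt t := by
  cases t with
  | node l b =>
    simp only [children] at h
    have hm : dpt t' ∈ (l.attach.map (fun x => dpt x.1.2)) :=
      List.mem_map.2 ⟨⟨(U, t'), h⟩, List.mem_attach _ _, rfl⟩
    rw [dpt]
    exact Nat.lt_succ_of_le (le_foldr_max hm)

theorem dpt_pos (t : STree Lab) : 1 ≤ dpt t := by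
  cases t with
  | node l b => rw [dpt]; omega

theorem lbls_finite (t : STree Lab) : Set.Finite {a | a ∈ lbls t} :=
  (lbls t).finite_toSet

end STree

namespace LTS

variable {Lab : Type}

theorem strat_mono_succ (L : LTS Lab) (P : Set Lab) :
    ∀ n (p q : L.Proc), L.strat P (n + 1) p q → L.strat P n p q
  | 0, _, _, _ => trivial
  | n + 1, p, q, h => by
    obtain ⟨h1, h2⟩ := h
    refine ⟨fun U hU p' hp' => ?_, fun hi hd => ?_⟩
    · obtain ⟨q', hq', hs⟩ := h1 U hU p' hp'
      exact ⟨q', hq', strat_mono_succ L P n p' q' hs⟩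
    · obtain ⟨ha, hb, hc⟩ := h2 hi hd
      refine ⟨ha, hb, fun U hU q' hq' => ?_⟩
      obtain ⟨p', hp', hs⟩ := hc U hU q' hq'
      exact ⟨p', hp', strat_mono_succ L P n p' q' hs⟩

theorem strat_mono (L : LTS Lab) (P : Set Lab) {m n : ℕ} (h : m ≤ n)
    {p q : L.Proc} (hs : L.strat P n p q) : L.strat P m p q := by
  obtain ⟨k, rfl⟩ := Nat.exists_eq_add_of_le h
  clear h
  induction k with
  | zero => exact hs
  | succ k ih => exact ih (strat_mono_succ L P _ p q hs)

theorem pre_strat (L : LTS Lab) (u : Lab) {R : L.Proc → L.Proc → Prop}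
    (hR : L.IsPrebisimulation R) :
    ∀ n (P : Set Lab) (p q : L.Proc), R p q → L.strat P n p q
  | 0, _, _, _, _ => trivial
  | n + 1, P, p, q, h => by
    have hF := hR p q h
    refine ⟨fun U hU p' hp' => ?_, fun hi hd => ?_⟩
    · obtain ⟨q', hq', hr⟩ := (hF U).1 p' hp'
      exact ⟨q', hq', pre_strat L u hR n P p' q' hr⟩
    · refine ⟨fun U hUq => ?_, ((hF u).2 hd).1, fun U hU q' hq' => ?_⟩
      · obtain ⟨q', hq'⟩ := hUq
        obtain ⟨p', hp', _⟩ := ((hF U).2 hd).2 q' hq'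
        exact hi ⟨p', hp'⟩
      · obtain ⟨p', hp', hr⟩ := ((hF U).2 hd).2 q' hq'
        exact ⟨p', hp', pre_strat L u hR n P p' q' hr⟩

end LTS

variable {Lab : Type} (L : LTS Lab)

theorem initials_inl_sub (t : STree Lab) :
    L.withTrees.initials (Sum.inl t) ⊆ {a | a ∈ STree.lbls t} := by
  rintro U ⟨y, hy⟩
  cases y with
  | inl t' => exact STree.label_mem hy
  | inr p => exact hy.elim

/-- For a tree of depth `d`, `⊑^P_d` implies `⊑^P_n` for every `n`. -/
theorem strat_dpt (P : Set Lab) :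
    ∀ n (t : STree Lab) (x : L.withTrees.Proc),
      L.withTrees.strat P t.dpt (Sum.inl t) x → L.withTrees.strat P n (Sum.inl t) x
  | 0, _, _, _ => trivial
  | n + 1, t, x, h => by
    have hd : t.dpt = (t.dpt - 1) + 1 := by have := STree.dpt_pos t; omega
    rw [hd] at h
    obtain ⟨h1, h2⟩ := h
    refine ⟨fun U hU y hy => ?_, fun hi hdv => ?_⟩
    · cases y with
      | inr p' => exact hy.elim
      | inl t' =>
        obtain ⟨x', hx', hs⟩ := h1 U hU (Sum.inl t') hy
        have hle : t'.dpt ≤ t.dpt - 1 := by have := STree.dpt_lt hy; omega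
        exact ⟨x', hx', strat_dpt P n t' x'
          (LTS.strat_mono _ P hle hs)⟩
    · obtain ⟨ha, hb, hc⟩ := h2 hi hdv
      refine ⟨ha, hb, fun U hU q' hq' => ?_⟩
      obtain ⟨y, hy, hs⟩ := hc U hU q' hq'
      cases y with
      | inr p' => exact hy.elim
      | inl t' =>
        have hle : t'.dpt ≤ t.dpt - 1 := by have := STree.dpt_lt hy; omega
        exact ⟨Sum.inl t', hy, strat_dpt P n t' q'
          (LTS.strat_mono _ P hle hs)⟩

/-- Enlarging the label set `P ⊆ P'` preserves `⊑^P_n` from a tree,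
provided `P` already contains all labels of the tree. -/
theorem strat_exp :
    ∀ n (t : STree Lab) (x : L.withTrees.Proc) (P P' : Set Lab),
      {a | a ∈ STree.lbls t} ⊆ P → P ⊆ P' →
      L.withTrees.strat P n (Sum.inl t) x → L.withTrees.strat P' n (Sum.inl t) x
  | 0, _, _, _, _, _, _, _ => trivial
  | n + 1, t, x, P, P', hl, hPP, h => by
    obtain ⟨h1, h2⟩ := h
    refine ⟨fun U _ y hy => ?_, fun _ hdv => ?_⟩
    · cases y with
      | inr p' => exact hy.elim
      | inl t' =>
        obtain ⟨x', hx', hs⟩ := h1 U (hl (STree.label_mem hy)) (Sum.inl t') hy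
        exact ⟨x', hx', strat_exp n t' x' P P'
          (fun a ha => hl (STree.lbls_sub hy ha)) hPP hs⟩
    · have hi' : L.withTrees.initials (Sum.inl t) ⊆ P :=
        fun a ha => hl (initials_inl_sub L t ha)
      obtain ⟨ha, hb, hc⟩ := h2 hi' hdv
      refine ⟨fun a haq => hPP (ha haq), hb, fun U _ q' hq' => ?_⟩
      obtain ⟨y, hy, hs⟩ := hc U (ha ⟨q', hq'⟩) q' hq'
      cases y with
      | inr p' => exact hy.elim
      | inl t' =>
        exact ⟨Sum.inl t', hy, strat_exp n t' q' P P'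
          (fun a hat => hl (STree.lbls_sub hy hat)) hPP hs⟩

/-- Shrinking the label set `P ⊆ P'` preserves `⊑^{P'}_n` from a tree,
provided `P'` contains all labels of the tree. -/
theorem strat_res :
    ∀ n (t : STree Lab) (x : L.withTrees.Proc) (P P' : Set Lab),
      {a | a ∈ STree.lbls t} ⊆ P' → P ⊆ P' →
      L.withTrees.strat P' n (Sum.inl t) x → L.withTrees.strat P n (Sum.inl t) x
  | 0, _, _, _, _, _, _, _ => trivial
  | n + 1, t, x, P, P', hl, hPP, h => by
    obtain ⟨h1, h2⟩ := h
    refine ⟨fun U hU y hy => ?_, fun hi hdv => ?_⟩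
    · cases y with
      | inr p' => exact hy.elim
      | inl t' =>
        obtain ⟨x', hx', hs⟩ := h1 U (hPP hU) (Sum.inl t') hy
        exact ⟨x', hx', strat_res n t' x' P P'
          (fun a ha => hl (STree.lbls_sub hy ha)) hPP hs⟩
    · have hi' : L.withTrees.initials (Sum.inl t) ⊆ P' :=
        fun a ha => hl (initials_inl_sub L t ha)
      obtain ⟨ha, hb, hc⟩ := h2 hi' hdv
      refine ⟨fun U hUx => ?_, hb, fun U hU q' hq' => ?_⟩
      · obtain ⟨q', hq'⟩ := hUx
        obtain ⟨y, hy, _⟩ := hc U (ha ⟨q', hq'⟩) q' hq'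
        cases y with
        | inr p' => exact hy.elim
        | inl t' => exact hi ⟨Sum.inl t', hy⟩
      · obtain ⟨y, hy, hs⟩ := hc U (hPP hU) q' hq'
        cases y with
        | inr p' => exact hy.elim
        | inl t' =>
          exact ⟨Sum.inl t', hy, strat_res n t' q' P P'
            (fun a ha => hl (STree.lbls_sub hy ha)) hPP hs⟩

/-- From `⊑^{P₀}_ω` for the label set of the tree, `⊑^fin_ω` follows. -/
theorem stratOmega_lbls_finOmega (t : STree Lab) (x : L.withTrees.Proc)
    (h : L.withTrees.stratOmega {a | a ∈ STree.lbls t} (Sum.inl t) x) :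
    L.withTrees.finOmega (Sum.inl t) x := by
  intro P _ n
  set P0 : Set Lab := {a | a ∈ STree.lbls t}
  have h1 : L.withTrees.strat (P ∪ P0) n (Sum.inl t) x :=
    strat_exp L n t x P0 (P ∪ P0) (fun a ha => ha) Set.subset_union_right (h n)
  exact strat_res L n t x P (P ∪ P0) Set.subset_union_right Set.subset_union_left h1

end Aux

theorem tree_pre_iff_finOmega_slts (Act : Type) (L : LTS (Multiset Act)) (t : STree (Multiset Act)) (p : L.Proc) :
    L.withTrees.Pre (Sum.inl t) (Sum.inr p) ↔
      L.withTrees.finOmega (Sum.inl t) (Sum.inr p) := by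
  constructor
  · rintro ⟨R, hR, hr⟩ P _ n
    exact LTS.pre_strat _ (0 : Multiset Act) hR n P _ _ hr
  · intro h
    refine ⟨fun x y => ∃ (s : STree (Multiset Act)) (q : L.Proc),
      x = Sum.inl s ∧ y = Sum.inr q ∧ L.withTrees.finOmega x y, ?_, t, p, rfl, rfl, h⟩
    rintro a b ⟨s, q, rfl, rfl, hfo⟩ U
    have hP0f : Set.Finite {a | a ∈ STree.lbls s} := STree.lbls_finite s
    constructor
    · intro x' hx'
      cases x' with
      | inr q' => exact hx'.elim
      | inl s' =>
        have hUs : U ∈ {a | a ∈ STree.lbls s} := STree.label_mem hx'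
        have h1 := hfo _ hP0f (s'.dpt + 1)
        obtain ⟨y, hy, hs⟩ := h1.1 U hUs (Sum.inl s') hx'
        cases y with
        | inl s'' => exact hy.elim
        | inr q' =>
          refine ⟨Sum.inr q', hy, s', q', rfl, rfl,
            stratOmega_lbls_finOmega L s' (Sum.inr q') fun n => ?_⟩
          have hall := strat_dpt L {a | a ∈ STree.lbls s} n s' (Sum.inr q') hs
          exact strat_res L n s' (Sum.inr q') _ _
            (fun a ha => STree.lbls_sub hx' ha)
            (fun a ha => STree.lbls_sub hx' ha) hall
    · intro hnd
      have hi : L.withTrees.initials (Sum.inl s) ⊆ {a | a ∈ STree.lbls s} :=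
        initials_inl_sub L s
      have h1 := hfo _ hP0f (0 + 1)
      obtain ⟨hq1, hnq, _⟩ := h1.2 hi hnd
      refine ⟨hnq, fun q' hq' => ?_⟩
      cases q' with
      | inl s'' => exact hq'.elim
      | inr q' =>
        have hU : U ∈ {a | a ∈ STree.lbls s} := hq1 ⟨Sum.inr q', hq'⟩
        have h2 := hfo _ hP0f (s.dpt - 1 + 1)
        obtain ⟨_, _, hc⟩ := h2.2 hi hnd
        obtain ⟨y, hy, hs⟩ := hc U hU (Sum.inr q') hq'
        cases y with
        | inr p'' => exact hy.elim
        | inl s' =>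
          have hle : s'.dpt ≤ s.dpt - 1 := by have := STree.dpt_lt hy; omega
          have hall := fun n => strat_dpt L {a | a ∈ STree.lbls s} n s' (Sum.inr q')
            (LTS.strat_mono _ _ hle hs)
          refine ⟨Sum.inl s', hy, s', q', rfl, rfl,
            stratOmega_lbls_finOmega L s' (Sum.inr q') fun n => ?_⟩
          exact strat_res L n s' (Sum.inr q') _ _
            (fun a ha => STree.lbls_sub hy ha)
            (fun a ha => STree.lbls_sub hy ha) (hall n)
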